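/- arXiv:2512.06992 — 7 statements merged into one kernel-verified Lean document; each statement's English description precedes it below -/
import Mathlib

section
/- For every integer n ≥ 3 and every real x > 0, the polynomial g_n(x) = x^{2n} - 2^{n-1} x + 2^n (2^n - 3) is strictly positive. -/
/-- For every integer `n ≥ 3` and real `x > 0`, the polynomial
`g_n(x) = x^(2n) - 2^(n-1) x + 2^n (2^n - 3)` is strictly positive. -/
theorem stmt5 (n : ℕ) (hn : 3 ≤ n) (x : ℝ) (hx : 0 < x) :
    0 < x ^ (2 * n) - 2 ^ (n - 1) * x + 2 ^ n * (2 ^ n - 3) := by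
  have h8 : (8:ℝ) ≤ 2 ^ n := by
    calc (8:ℝ) = 2 ^ 3 := by norm_num
    _ ≤ 2 ^ n := by exact pow_le_pow_right₀ (by norm_num) hn
  rcases le_or_gt x 2 with h | h
  · have h1 : (2:ℝ) ^ (n - 1) * x ≤ 2 ^ n := by
      have hp : (0:ℝ) < 2 ^ (n - 1) := pow_pos (by norm_num) _
      have h2 : (2:ℝ) ^ (n - 1) * 2 = 2 ^ n := by
        rw [← pow_succ]; congr 1; omega
      nlinarith
    nlinarith [pow_nonneg hx.le (2 * n)]
  · have hx2 : (2:ℝ) ≤ x := h.le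
    have h1 : (2:ℝ) ^ (n - 1) * x ≤ x ^ (2 * n) := by
      calc (2:ℝ) ^ (n - 1) * x ≤ x ^ (2 * n - 1) * x := by
            apply mul_le_mul_of_nonneg_right _ hx.le
            calc (2:ℝ) ^ (n - 1) ≤ 2 ^ (2 * n - 1) :=
                  pow_le_pow_right₀ one_le_two (by omega)
            _ ≤ x ^ (2 * n - 1) := pow_le_pow_left₀ (by norm_num) hx2 _
      _ = x ^ (2 * n) := by rw [← pow_succ]; congr 1; omega
    nlinarith
end

section
/- Let n ≥ 3, a ∈ ℂ \ {0}, and b ∈ ℂ with b + 2√a = a^{1/(2n)} (the principal 2n-th root) and |b - 2√a| ≤ 2. Then for every z ∈ ℂ with |z| ≤ 2, one has |z - (b+2√a)| + |z - (b-2√a)| < 2(2^n + |a|/2^n). -/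
open Complex

lemma key_real (n : ℕ) (hn : 3 ≤ n) (s : ℝ) (hs : 0 ≤ s) :
    6 + s < 2 * 2 ^ n + 2 * s ^ (2 * n) / 2 ^ n := by
  have h2n : (8 : ℝ) ≤ 2 ^ n := by
    calc (8 : ℝ) = 2 ^ 3 := by norm_num
    _ ≤ 2 ^ n := pow_le_pow_right₀ (by norm_num) hn
  have hpos : (0 : ℝ) < 2 ^ n := by positivity
  rcases le_or_gt s 2 with h | h
  · have : (0:ℝ) ≤ 2 * s ^ (2 * n) / 2 ^ n := by positivity
    linarith
  · have hs1 : (1:ℝ) ≤ s := by linarith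
    have h1 : s ^ (2*n) / 2 ^ n = (s^2 / 2) ^ n := by
      rw [div_pow, ← pow_mul]
    have h2 : s ≤ s^2 / 2 := by nlinarith
    have h3 : s ^ n ≤ (s^2/2) ^ n := pow_le_pow_left₀ (by linarith) h2 n
    have h4 : s ^ 3 ≤ s ^ n := pow_le_pow_right₀ hs1 hn
    have h5 : 6 + s < 2 * s ^ 3 := by nlinarith
    have : 2 * s ^ (2*n) / 2 ^ n = 2 * (s^2/2)^n := by
      rw [mul_div_assoc, h1]
    rw [this]
    nlinarith

/-- If `b + 2√a` equals the principal `2n`-th root of `a` and `|b - 2√a| ≤ 2`, then the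
closed disk of radius `2` lies inside the ellipse with foci `b ± 2√a` and sum of focal
distances `2(2^n + |a|/2^n)`. -/
theorem stmt7 (n : ℕ) (hn : 3 ≤ n) (a : ℂ) (ha : a ≠ 0) (b : ℂ)
    (hvp : b + 2 * a ^ ((1 : ℂ)/2) = a ^ ((1 : ℂ) / (2 * n)))
    (hvm : ‖b - 2 * a ^ ((1 : ℂ)/2)‖ ≤ 2)
    (z : ℂ) (hz : ‖z‖ ≤ 2) :
    ‖z - (b + 2 * a ^ ((1 : ℂ)/2))‖ +
      ‖z - (b - 2 * a ^ ((1 : ℂ)/2))‖ <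
      2 * (2 ^ n + ‖a‖ / 2 ^ n) := by
  set t : ℝ := ‖a‖ with ht
  have ht0 : 0 < t := norm_pos_iff.mpr ha
  set s : ℝ := t ^ ((1 : ℝ) / (2 * n)) with hsdef
  have hs0 : 0 ≤ s := Real.rpow_nonneg ht0.le _
  -- |v+| = s
  have habs : ‖a ^ ((1 : ℂ) / (2 * n))‖ = s := by
    have : ((1 : ℂ) / (2 * n)) = (((1 : ℝ) / (2 * n) : ℝ) : ℂ) := by push_cast; ring
    rw [this, Complex.norm_cpow_real]
  -- s ^ (2n) = t
  have hst : s ^ (2 * n) = t := by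
    rw [hsdef, ← Real.rpow_natCast (t ^ ((1:ℝ)/(2*n))) (2*n), ← Real.rpow_mul ht0.le]
    have : (1:ℝ) / (2*n) * (2*n : ℕ) = 1 := by
      push_cast
      field_simp
    rw [this, Real.rpow_one]
  have h1 : ‖z - (b + 2 * a ^ ((1 : ℂ)/2))‖ ≤ 2 + s := by
    calc ‖z - (b + 2 * a ^ ((1 : ℂ)/2))‖
        ≤ ‖z‖ + ‖b + 2 * a ^ ((1 : ℂ)/2)‖ := by
          exact norm_sub_le _ _
      _ ≤ 2 + s := by rw [hvp, habs]; linarith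
  have h2 : ‖z - (b - 2 * a ^ ((1 : ℂ)/2))‖ ≤ 4 := by
    calc ‖z - (b - 2 * a ^ ((1 : ℂ)/2))‖
        ≤ ‖z‖ + ‖b - 2 * a ^ ((1 : ℂ)/2)‖ := by
          exact norm_sub_le _ _
      _ ≤ 4 := by linarith
  have hkey := key_real n hn s hs0
  rw [hst] at hkey
  have : 2 * ((2:ℝ) ^ n + t / 2 ^ n) = 2 * 2 ^ n + 2 * t / 2 ^ n := by ring
  rw [ht] at *
  linarith [hkey, h1, h2, this.ge, this.le]
end

section
/- Let n ≥ 2 and set α_k = (1 - e^{ikπ/n})/4 for an integer k with 1 ≤ k ≤ 2n-1. If a = α_k^{2n/(n-1)} (for a fixed branch), b = a^{1/(2n)} - 2√a, and v_- = b - 2√a, where roots are chosen consistently so that a^{1/(2n)} = α_k^{1/(n-1)} and √a = α_k^{n/(n-1)}, then (v_-)^n + a/(v_-)^n = (e^{ikπ} + e^{-ikπ}) · α_k^{n/(n-1)}; in particular R_{n,a,b}(v_-) - b equals -2√a if k is odd and +2√a if k is even. -/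
open Complex Real

/-- At the parameter `a = α_k^(2n/(n-1))` with `α_k = (1 - e^{ikπ/n})/4`, realized via a
complex `β` with `β^(n-1) = α_k` (so `a = β^(2n)`, `a^(1/(2n)) = β`, `√a = β^n`,
`b = β - 2β^n`, `v_- = b - 2√a = β - 4β^n`), one has
`v_-^n + a/v_-^n = (e^{ikπ} + e^{-ikπ}) β^n`; in particular `R_{n,a,b}(v_-) - b` equals
`-2√a` when `k` is odd and `+2√a` when `k` is even. -/
theorem stmt8 (n : ℕ) (hn : 2 ≤ n) (k : ℤ) (hk : 1 ≤ k ∧ k ≤ 2 * n - 1)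
    (α β : ℂ)
    (hα : α = (1 - Complex.exp (Complex.I * k * Real.pi / n)) / 4) (hα0 : α ≠ 0)
    (hβ : β ^ (n - 1) = α) :
    (β - 4 * β ^ n) ^ n + β ^ (2 * n) / (β - 4 * β ^ n) ^ n =
        (Complex.exp (Complex.I * k * Real.pi) + Complex.exp (-(Complex.I * k * Real.pi)))
          * β ^ n ∧
    (Odd k → (β - 4 * β ^ n) ^ n + β ^ (2 * n) / (β - 4 * β ^ n) ^ n = -(2 * β ^ n)) ∧
    (Even k → (β - 4 * β ^ n) ^ n + β ^ (2 * n) / (β - 4 * β ^ n) ^ n = 2 * β ^ n) := by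
  have hβ0 : β ≠ 0 := by
    intro h
    apply hα0
    rw [← hβ, h, zero_pow (by omega)]
  have hnC : (n : ℂ) ≠ 0 := Nat.cast_ne_zero.mpr (by omega)
  set E := Complex.exp (Complex.I * k * Real.pi) with hEdef
  have hE : Complex.exp (Complex.I * k * Real.pi / n) ^ n = E := by
    rw [← Complex.exp_nat_mul, hEdef]
    congr 1
    field_simp
  have hE0 : E ≠ 0 := Complex.exp_ne_zero _
  have h2 : β ^ n = β ^ (n - 1) * β := by rw [← pow_succ]; congr 1; omega
  have key : β - 4 * β ^ n = β * Complex.exp (Complex.I * k * Real.pi / n) := by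
    have h1 : Complex.exp (Complex.I * k * Real.pi / n) = 1 - 4 * α := by
      rw [hα]; ring
    rw [h1, h2, hβ]; ring
  have hpow : (β - 4 * β ^ n) ^ n = β ^ n * E := by
    rw [key, mul_pow, hE]
  have hmain : (β - 4 * β ^ n) ^ n + β ^ (2 * n) / (β - 4 * β ^ n) ^ n
      = (E + Complex.exp (-(Complex.I * k * Real.pi))) * β ^ n := by
    rw [hpow, Complex.exp_neg]
    have hsq : β ^ (2 * n) = β ^ n * β ^ n := by rw [← pow_add]; ring_nf
    rw [hsq]
    have hβn : β ^ n ≠ 0 := pow_ne_zero _ hβ0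
    field_simp
    ring
  have hEval : E = (-1 : ℂ) ^ k := by
    rw [hEdef, show Complex.I * k * Real.pi = k * (Real.pi * Complex.I) by push_cast; ring,
      Complex.exp_int_mul, Complex.exp_pi_mul_I]
  refine ⟨hmain, ?_, ?_⟩
  · intro hodd
    simp only [hmain, Complex.exp_neg, ← hEdef, hEval, hodd.neg_one_zpow]
    norm_num
  · intro heven
    simp only [hmain, Complex.exp_neg, ← hEdef, hEval, heven.neg_one_zpow]
    norm_num
end

section
/- Let n ≥ 2, let α ∈ ℂ \ {0} and let β ∈ ℂ satisfy β^{n-1} = α and 1 - 4α = e^{ikπ/n} for an integer k. Then (β - 4β^n)^n + β^{2n}/(β - 4β^n)^n = 2cos(kπ) β^n. In particular, this quantity equals -2β^n when k is odd and 2β^n when k is even. -/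
open Complex Real

/-- Core algebraic identity: if `β^(n-1) = α ≠ 0` and `1 - 4α = e^{ikπ/n}`, then
`(β - 4β^n)^n + β^(2n)/(β - 4β^n)^n = 2cos(kπ) β^n`; in particular this is `-2β^n`
for odd `k` and `2β^n` for even `k`. -/
theorem stmt9 (n : ℕ) (hn : 2 ≤ n) (k : ℤ) (α β : ℂ) (hα0 : α ≠ 0)
    (hβ : β ^ (n - 1) = α)
    (hk : 1 - 4 * α = Complex.exp (Complex.I * k * Real.pi / n)) :
    (β - 4 * β ^ n) ^ n + β ^ (2 * n) / (β - 4 * β ^ n) ^ n =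
        2 * ((Real.cos (k * Real.pi) : ℝ) : ℂ) * β ^ n ∧
    (Odd k → (β - 4 * β ^ n) ^ n + β ^ (2 * n) / (β - 4 * β ^ n) ^ n = -(2 * β ^ n)) ∧
    (Even k → (β - 4 * β ^ n) ^ n + β ^ (2 * n) / (β - 4 * β ^ n) ^ n = 2 * β ^ n) := by
  have hβ0 : β ≠ 0 := by
    intro h
    apply hα0
    rw [← hβ, h]
    exact zero_pow (by omega)
  have hn0 : (n : ℂ) ≠ 0 := Nat.cast_ne_zero.mpr (by omega)
  have hpow : β ^ n = β * β ^ (n - 1) := by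
    rw [← pow_succ']
    congr 1
    omega
  have key : β - 4 * β ^ n = β * Complex.exp (Complex.I * k * Real.pi / n) := by
    rw [hpow, hβ, ← hk]; ring
  have hexp : Complex.exp (Complex.I * k * Real.pi / n) ^ n = ((-1 : ℂ) ^ k) := by
    rw [← Complex.exp_nat_mul]
    have h2 : (n : ℂ) * (Complex.I * k * Real.pi / n) = k * (Real.pi * Complex.I) := by
      field_simp
    rw [h2, Complex.exp_int_mul, Complex.exp_pi_mul_I]
  have hne : ((-1 : ℂ) ^ k) ≠ 0 := zpow_ne_zero _ (by norm_num)
  have hsq : ((-1 : ℂ) ^ k) * ((-1 : ℂ) ^ k) = 1 := by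
    rw [← zpow_add₀ (by norm_num : (-1:ℂ) ≠ 0)]
    rcases Int.even_or_odd k with h | h
    · exact Even.neg_one_zpow (by exact h.add h)
    · exact Even.neg_one_zpow (Odd.add_odd h h)
  have hmain : (β - 4 * β ^ n) ^ n + β ^ (2 * n) / (β - 4 * β ^ n) ^ n
      = 2 * ((-1 : ℂ) ^ k) * β ^ n := by
    rw [key, mul_pow, hexp, two_mul, pow_add]
    field_simp
    linear_combination (-1) * hsq
  have hcos : Real.cos (k * Real.pi) = (-1 : ℝ) ^ k := by
    simpa using Real.cos_add_int_mul_pi 0 k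
  refine ⟨?_, ?_, ?_⟩
  · rw [hmain, hcos]
    push_cast
    ring
  · intro hodd
    rw [hmain, Odd.neg_one_zpow hodd]
    ring
  · intro heven
    rw [hmain, Even.neg_one_zpow heven]
    ring
end

section
/- For each fixed real x with 0 < x < 1, the function n ↦ x^{1/(2n)}(4 x^{(n-1)/(2n)} - 1) is decreasing in n for integers n ≥ 1, and its limit as n → ∞ is 4√x - 1. -/
open Real Filter

lemma stmt11_key (x : ℝ) (hx0 : 0 < x) {n : ℕ} (hn : 1 ≤ n) :
    x ^ (1 / (2 * (n : ℝ))) * (4 * x ^ (((n : ℝ) - 1) / (2 * (n : ℝ))) - 1) =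
      4 * Real.sqrt x - x ^ (1 / (2 * (n : ℝ))) := by
  have hn' : (n : ℝ) ≠ 0 := Nat.cast_ne_zero.mpr (by omega)
  have h : ((n : ℝ) - 1) / (2 * (n : ℝ)) + 1 / (2 * (n : ℝ)) = 1 / 2 := by
    field_simp; ring
  rw [mul_sub, mul_one, mul_comm (x ^ (1 / (2 * (n : ℝ)))) _, mul_assoc,
    ← Real.rpow_add hx0, h, Real.sqrt_eq_rpow]

/-- For fixed `0 < x < 1`, `n ↦ x^(1/(2n)) (4 x^((n-1)/(2n)) - 1)` is decreasing for
integers `n ≥ 1` and tends to `4√x - 1` as `n → ∞`. -/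
theorem stmt11 (x : ℝ) (hx0 : 0 < x) (hx1 : x < 1) :
    (∀ m n : ℕ, 1 ≤ m → m ≤ n →
      x ^ (1 / (2 * (n : ℝ))) * (4 * x ^ (((n : ℝ) - 1) / (2 * (n : ℝ))) - 1) ≤
        x ^ (1 / (2 * (m : ℝ))) * (4 * x ^ (((m : ℝ) - 1) / (2 * (m : ℝ))) - 1)) ∧
    Tendsto (fun n : ℕ =>
        x ^ (1 / (2 * (n : ℝ))) * (4 * x ^ (((n : ℝ) - 1) / (2 * (n : ℝ))) - 1))
      atTop (nhds (4 * Real.sqrt x - 1)) := by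
  constructor
  · intro m n hm hmn
    rw [stmt11_key x hx0 hm, stmt11_key x hx0 (hm.trans hmn)]
    have hmpos : (0 : ℝ) < 2 * (m : ℝ) := by positivity
    have hle : 1 / (2 * (n : ℝ)) ≤ 1 / (2 * (m : ℝ)) :=
      one_div_le_one_div_of_le hmpos (by
        have : (m : ℝ) ≤ (n : ℝ) := Nat.cast_le.mpr hmn
        linarith)
    have := Real.rpow_le_rpow_of_exponent_ge hx0 hx1.le hle
    linarith
  · have h1 : Tendsto (fun n : ℕ => 1 / (2 * (n : ℝ))) atTop (nhds 0) := by
      have : Tendsto (fun n : ℕ => 2 * (n : ℝ)) atTop atTop :=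
        (tendsto_natCast_atTop_atTop).const_mul_atTop (by norm_num)
      simp only [one_div]
      exact this.inv_tendsto_atTop
    have h2 : Tendsto (fun n : ℕ => x ^ (1 / (2 * (n : ℝ)))) atTop (nhds 1) := by
      have := (tendsto_const_nhds (x := x) (f := atTop (α := ℕ))).rpow h1
        (Or.inl hx0.ne')
      simpa using this
    have h3 : Tendsto (fun n : ℕ => 4 * Real.sqrt x - x ^ (1 / (2 * (n : ℝ))))
        atTop (nhds (4 * Real.sqrt x - 1)) := tendsto_const_nhds.sub h2
    refine h3.congr' ?_
    filter_upwards [eventually_ge_atTop 1] with n hn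
    exact (stmt11_key x hx0 hn).symm
end

section
/- The function L(n) = |√(5/2) · e^{i·19π/20} + (3/32)^{1/(2n)} · e^{iπ/(20n)}| is decreasing for integers n ≥ 3, satisfies L(3) < 0.95 and L(4) < 0.87, and lim_{n→∞} L(n) = |√(5/2)·e^{i·19π/20} + 1| < 0.62. -/
open Complex Real Filter

lemma abs_sq_form (a b θ φ : ℝ) :
    Norm.norm ((a:ℂ) * Complex.exp (Complex.I * θ) + (b:ℂ) * Complex.exp (Complex.I * φ)) ^ 2
      = a^2 + b^2 + 2*a*b*Real.cos (θ - φ) := by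
  rw [Complex.sq_norm, Complex.normSq_apply, mul_comm Complex.I (θ:ℂ), mul_comm Complex.I (φ:ℂ)]
  simp only [Complex.add_re, Complex.add_im, Complex.mul_re, Complex.mul_im,
    Complex.ofReal_re, Complex.ofReal_im, Complex.exp_ofReal_mul_I_re,
    Complex.exp_ofReal_mul_I_im, zero_mul, sub_zero, add_zero, zero_add]
  rw [Real.cos_sub]
  nlinarith [Real.sin_sq_add_cos_sq θ, Real.sin_sq_add_cos_sq φ]

lemma cos_pi_sub_le (x : ℝ) : Real.cos (Real.pi - x) ≤ -(1 - x^2/2) := by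
  rw [Real.cos_pi_sub]
  linarith [Real.one_sub_sq_div_two_le_cos (x := x)]

lemma sqrt_52_lb : (1.5811 : ℝ) ≤ Real.sqrt (5/2) := by
  nlinarith [Real.sq_sqrt (show (0:ℝ) ≤ 5/2 by norm_num),
    Real.sqrt_nonneg (5/2 : ℝ)]

set_option maxHeartbeats 1000000 in
/-- The function `L(n) = |√(5/2) e^{i19π/20} + (3/32)^(1/(2n)) e^{iπ/(20n)}|` is
decreasing for integers `n ≥ 3`, satisfies `L(3) < 0.95`, `L(4) < 0.87`, and tends to
`|√(5/2) e^{i19π/20} + 1| < 0.62` as `n → ∞`. -/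
theorem stmt15 :
    ∀ L : ℕ → ℝ,
      (L = fun n : ℕ =>
        Norm.norm (((Real.sqrt (5/2) : ℝ) : ℂ) *
            Complex.exp (Complex.I * (19 * Real.pi / 20)) +
          (((3/32 : ℝ) ^ (1 / (2 * (n : ℝ))) : ℝ) : ℂ) *
            Complex.exp (Complex.I * (Real.pi / (20 * (n : ℝ)))))) →
      (∀ m n : ℕ, 3 ≤ m → m < n → L n < L m) ∧
      L 3 < 0.95 ∧ L 4 < 0.87 ∧
      Tendsto L atTop (nhds (Norm.norm (((Real.sqrt (5/2) : ℝ) : ℂ) *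
          Complex.exp (Complex.I * (19 * Real.pi / 20)) + 1))) ∧
      Norm.norm (((Real.sqrt (5/2) : ℝ) : ℂ) *
          Complex.exp (Complex.I * (19 * Real.pi / 20)) + 1) < 0.62 := by
  intro L hL
  have hpi_pos := Real.pi_pos
  have hpi_lt : Real.pi < 3.141593 := Real.pi_lt_d6
  set A := Real.sqrt (5/2) with hAdef
  have hA : (1.5811:ℝ) ≤ A := sqrt_52_lb
  have hA2 : A^2 = 5/2 := Real.sq_sqrt (by norm_num)
  have hAnn : (0:ℝ) ≤ A := Real.sqrt_nonneg _
  have e1 : (19 * (Real.pi:ℂ) / 20) = ((19*Real.pi/20 : ℝ) : ℂ) := by push_cast; ring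
  have e2 : ∀ k : ℕ, ((Real.pi:ℂ) / (20 * ((k:ℝ):ℂ)))
      = ((Real.pi/(20*(k:ℝ)) : ℝ) : ℂ) := by intro k; push_cast; ring
  set r : ℕ → ℝ := fun k => (3/32:ℝ) ^ (1 / (2 * (k:ℝ))) with hrdef
  set c : ℕ → ℝ := fun k => Real.cos (19 * Real.pi / 20 - Real.pi / (20 * (k:ℝ))) with hcdef
  have hLnn : ∀ k, 0 ≤ L k := by
    intro k; rw [hL]; exact norm_nonneg _
  have key : ∀ k : ℕ, L k ^ 2 = 5/2 + (r k)^2 + 2 * A * (r k) * (c k) := by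
    intro k
    rw [hL]
    simp only
    rw [e1, e2 k, abs_sq_form, hA2, hrdef, hcdef]
  have hrpos : ∀ k : ℕ, 0 < r k := by
    intro k; exact Real.rpow_pos_of_pos (by norm_num) _
  have hrle1 : ∀ k : ℕ, r k ≤ 1 := by
    intro k
    exact Real.rpow_le_one (by norm_num) (by norm_num) (by positivity)
  have hrpow : ∀ (k : ℕ), 0 < k → ∀ (j : ℕ), (j:ℝ) = 2 * k → (r k) ^ j = 3/32 := by
    intro k hk j hj
    have hkpos : (0:ℝ) < 2 * (k:ℝ) := by
      have : (0:ℝ) < (k:ℝ) := by exact_mod_cast hk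
      linarith
    rw [hrdef]
    simp only
    rw [← Real.rpow_natCast ((3/32:ℝ) ^ (1 / (2 * (k:ℝ)))) j, ← Real.rpow_mul (by norm_num), hj]
    rw [one_div, inv_mul_cancel₀ (ne_of_gt hkpos), Real.rpow_one]
  -- angle facts
  have hangle : ∀ k : ℕ, 3 ≤ k →
      19 * Real.pi / 20 - Real.pi / (20 * (k:ℝ)) ∈ Set.Icc 0 Real.pi ∧
      c k ≤ -0.707 := by
    intro k hk
    have hk3 : (3:ℝ) ≤ (k:ℝ) := by exact_mod_cast hk
    have hkpos : (0:ℝ) < (k:ℝ) := by linarith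
    have hfrac : Real.pi / (20 * (k:ℝ)) ≤ Real.pi / 60 := by
      apply div_le_div_of_nonneg_left (le_of_lt hpi_pos) (by norm_num) (by linarith)
    have hfracpos : 0 < Real.pi / (20 * (k:ℝ)) := by positivity
    refine ⟨⟨by linarith, by linarith⟩, ?_⟩
    have heq : 19 * Real.pi / 20 - Real.pi / (20 * (k:ℝ))
        = Real.pi - (Real.pi / 20 + Real.pi / (20 * (k:ℝ))) := by ring
    have hx2 : (Real.pi / 20 + Real.pi / (20 * (k:ℝ)))^2 / 2 ≤ 0.05 := by
      have h1 : Real.pi / 20 + Real.pi / (20 * (k:ℝ)) ≤ Real.pi / 20 + Real.pi / 60 := by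
        linarith
      have h2 : Real.pi / 20 + Real.pi / 60 ≤ 0.21 := by nlinarith
      nlinarith [hfracpos, hpi_pos]
    have := cos_pi_sub_le (Real.pi / 20 + Real.pi / (20 * (k:ℝ)))
    rw [hcdef]
    simp only
    rw [heq]
    linarith
  -- monotonicity
  have mono : ∀ m n : ℕ, 3 ≤ m → m < n → L n < L m := by
    intro m n hm hmn
    have hn : 3 ≤ n := le_of_lt (lt_of_le_of_lt hm hmn)
    have hm3 : (3:ℝ) ≤ (m:ℝ) := by exact_mod_cast hm
    have hn3 : (3:ℝ) ≤ (n:ℝ) := by exact_mod_cast hn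
    have hmnR : (m:ℝ) < (n:ℝ) := by exact_mod_cast hmn
    have hrlt : r m < r n := by
      rw [hrdef]
      apply Real.rpow_lt_rpow_of_exponent_gt (by norm_num) (by norm_num)
      rw [div_lt_div_iff₀ (by positivity) (by positivity)]
      nlinarith
    have hclt : c n < c m := by
      obtain ⟨hmem_m, _⟩ := hangle m hm
      obtain ⟨hmem_n, _⟩ := hangle n hn
      apply Real.strictAntiOn_cos hmem_m hmem_n
      have : Real.pi / (20 * (n:ℝ)) < Real.pi / (20 * (m:ℝ)) := by
        apply div_lt_div_of_pos_left hpi_pos (by positivity)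
        nlinarith
      linarith
    have hcm : c m ≤ -0.707 := (hangle m hm).2
    have hsq : L n ^ 2 < L m ^ 2 := by
      rw [key n, key m]
      have h1 : 2 * A * r n * c n < 2 * A * r n * c m := by
        have hpos : 0 < 2 * A * r n := by
          have := hrpos n; nlinarith
        exact (mul_lt_mul_iff_right₀ hpos).mpr hclt
      have h2 : (r n - r m) * (r n + r m + 2 * A * c m) < 0 := by
        apply mul_neg_of_pos_of_neg (by linarith)
        have hrn1 := hrle1 n
        have hrm1 := hrle1 m
        nlinarith [hA, hcm]
      have h2' : r n ^ 2 + 2 * A * r n * c m < r m ^ 2 + 2 * A * r m * c m := by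
        nlinarith [h2]
      linarith [h1, h2']
    exact lt_of_pow_lt_pow_left₀ 2 (hLnn m) hsq
  refine ⟨mono, ?_, ?_, ?_, ?_⟩
  · -- L 3 < 0.95
    have hr6 : (r 3) ^ (6:ℕ) = 3/32 := hrpow 3 (by norm_num) 6 (by norm_num)
    have hrlo : (0.67:ℝ) ≤ r 3 := by
      have h67 : ((0.67:ℝ)) ^ (6:ℕ) ≤ (r 3) ^ (6:ℕ) := by rw [hr6]; norm_num
      exact le_of_pow_le_pow_left₀ (by norm_num) (le_of_lt (hrpos 3)) h67
    have hrhi := hrle1 3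
    have hc : c 3 ≤ -0.978 := by
      have heq : 19 * Real.pi / 20 - Real.pi / (20 * ((3:ℕ):ℝ)) = Real.pi - Real.pi/15 := by
        push_cast; ring
      have h := cos_pi_sub_le (Real.pi / 15)
      have hx : (Real.pi/15)^2/2 ≤ 0.022 := by nlinarith
      rw [hcdef]; simp only [heq]
      linarith
    have hsq : L 3 ^ 2 < 0.95 ^ 2 := by
      rw [key 3]
      have hAc : A * c 3 ≤ -1.546 := by
        nlinarith
      have hArc : A * c 3 * r 3 ≤ -1.546 * r 3 :=
        mul_le_mul_of_nonneg_right hAc (le_of_lt (hrpos 3))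
      nlinarith [mul_nonneg (sub_nonneg.2 hrlo) (sub_nonneg.2 hrhi)]
    exact lt_of_pow_lt_pow_left₀ 2 (by norm_num) hsq
  · -- L 4 < 0.87
    have hr8 : (r 4) ^ (8:ℕ) = 3/32 := hrpow 4 (by norm_num) 8 (by norm_num)
    have hrlo : (0.743:ℝ) ≤ r 4 := by
      have h74 : ((0.743:ℝ)) ^ (8:ℕ) ≤ (r 4) ^ (8:ℕ) := by rw [hr8]; norm_num
      exact le_of_pow_le_pow_left₀ (by norm_num) (le_of_lt (hrpos 4)) h74
    have hrhi := hrle1 4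
    have hc : c 4 ≤ -0.9807 := by
      have heq : 19 * Real.pi / 20 - Real.pi / (20 * ((4:ℕ):ℝ)) = Real.pi - Real.pi/16 := by
        push_cast; ring
      have h := cos_pi_sub_le (Real.pi / 16)
      have hx : (Real.pi/16)^2/2 ≤ 0.0193 := by nlinarith
      rw [hcdef]; simp only [heq]
      linarith
    have hsq : L 4 ^ 2 < 0.87 ^ 2 := by
      rw [key 4]
      have hAc : A * c 4 ≤ -1.5505 := by
        nlinarith
      have hArc : A * c 4 * r 4 ≤ -1.5505 * r 4 :=
        mul_le_mul_of_nonneg_right hAc (le_of_lt (hrpos 4))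
      nlinarith [mul_nonneg (sub_nonneg.2 hrlo) (sub_nonneg.2 hrhi)]
    exact lt_of_pow_lt_pow_left₀ 2 (by norm_num) hsq
  · -- limit
    rw [hL]
    have hinv : ∀ b : ℝ, 0 < b → Tendsto (fun n : ℕ => 1 / (b * (n:ℝ))) atTop (nhds 0) := by
      intro b hb
      exact tendsto_const_nhds.div_atTop ((tendsto_natCast_atTop_atTop).const_mul_atTop hb)
    have hrlim : Tendsto (fun n : ℕ => (3/32:ℝ) ^ (1 / (2 * (n:ℝ)))) atTop (nhds 1) := by
      have hcont : ContinuousAt (fun y : ℝ => (3/32:ℝ) ^ y) 0 :=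
        Real.continuousAt_const_rpow (by norm_num)
      have := hcont.tendsto.comp (hinv 2 two_pos)
      simpa [Function.comp_def, Real.rpow_zero] using this
    have hθlim : Tendsto (fun n : ℕ => Real.pi / (20 * (n:ℝ))) atTop (nhds 0) := by
      have h := (hinv 20 (by norm_num)).const_mul Real.pi
      rw [mul_zero] at h
      exact h.congr fun n => by rw [mul_one_div]
    have h1 : Tendsto (fun n : ℕ => (((3/32:ℝ)^(1/(2*(n:ℝ))) : ℝ) : ℂ)) atTop (nhds 1) := by
      have := (Complex.continuous_ofReal.tendsto 1).comp hrlim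
      simpa [Function.comp_def] using this
    have h2 : Tendsto (fun n : ℕ => Complex.exp (Complex.I * ((Real.pi/(20*(n:ℝ)) : ℝ) : ℂ)))
        atTop (nhds 1) := by
      have harg : Tendsto (fun n : ℕ => Complex.I * ((Real.pi/(20*(n:ℝ)) : ℝ) : ℂ))
          atTop (nhds 0) := by
        have := ((Complex.continuous_ofReal.tendsto 0).comp hθlim).const_mul Complex.I
        simpa [Function.comp] using this
      have := (Complex.continuous_exp.tendsto 0).comp harg
      simpa [Function.comp_def, Complex.exp_zero] using this
    have hw : Tendsto (fun n : ℕ => (((3/32:ℝ)^(1/(2*(n:ℝ))) : ℝ) : ℂ) *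
        Complex.exp (Complex.I * ((Real.pi/(20*(n:ℝ)) : ℝ) : ℂ))) atTop (nhds 1) := by
      simpa using h1.mul h2
    have habs : Tendsto (fun w : ℂ => Norm.norm ((A:ℂ) *
        Complex.exp (Complex.I * (19 * (Real.pi:ℂ) / 20)) + w)) (nhds 1)
        (nhds (Norm.norm ((A:ℂ) * Complex.exp (Complex.I * (19 * (Real.pi:ℂ) / 20)) + 1))) := by
      exact (continuous_norm.comp (continuous_const.add continuous_id)).tendsto 1
    have := habs.comp hw
    refine this.congr fun n => ?_
    simp only [Function.comp]
    congr 2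
    rw [e2 n]
  · -- limit bound
    have hone : (1:ℂ) = ((1:ℝ):ℂ) * Complex.exp (Complex.I * ((0:ℝ):ℂ)) := by
      simp
    have hsq : Norm.norm ((A:ℂ) * Complex.exp (Complex.I * (19 * (Real.pi:ℂ) / 20)) + 1) ^ 2
        = 5/2 + 1 + 2*A*Real.cos (19*Real.pi/20 - 0) := by
      rw [hone, e1, abs_sq_form, hA2]
      ring
    have hcos : Real.cos (19*Real.pi/20 - 0) ≤ -0.9876 := by
      have heq : 19*Real.pi/20 - 0 = Real.pi - Real.pi/20 := by ring
      have h := cos_pi_sub_le (Real.pi / 20)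
      have hx : (Real.pi/20)^2/2 ≤ 0.01234 := by nlinarith
      rw [heq]
      linarith
    have hfin : Norm.norm ((A:ℂ) * Complex.exp (Complex.I * (19 * (Real.pi:ℂ) / 20)) + 1) ^ 2
        < 0.62^2 := by
      rw [hsq]
      nlinarith [Real.neg_one_le_cos (19*Real.pi/20 - 0)]
    exact lt_of_pow_lt_pow_left₀ 2 (by norm_num) hfin
end

section
/- For each integer n ≥ 2, the 2n-1 complex numbers a_k = ((1 - e^{ikπ/n})/4)^{2n/(n-1)}, k = 1, ..., 2n-1 (for a fixed branch of the power), are exactly the nonzero solutions of the equation |a|^{1/(2n)} e^{iψ/(2n)} - 4√a = |a|^{1/(2n)} e^{i(ψ + 2kπ)/(2n)} for some k ∈ {1,...,2n-1}, where ψ = Arg(a) and √a is the principal square root; equivalently, they are the parameters a for which the free critical value v_- = b_{n,0}(a) - 2√a equals a non-principal 2n-th root of a. -/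
open Complex Real

lemma polar_key (z : ℂ) : 1 - Complex.exp (2*z*I) =
    (2 * Complex.sin z) * Complex.exp ((z - Real.pi/2) * I) := by
  rw [Complex.exp_mul_I, Complex.exp_mul_I, Complex.cos_two_mul, Complex.sin_two_mul,
    Complex.cos_sub, Complex.sin_sub]
  have c2 : Complex.cos ((Real.pi : ℂ)/2) = 0 := by
    rw [show ((Real.pi : ℂ)/2) = ((Real.pi/2 : ℝ) : ℂ) by push_cast; ring, ← Complex.ofReal_cos,
      Real.cos_pi_div_two, Complex.ofReal_zero]
  have s2 : Complex.sin ((Real.pi : ℂ)/2) = 1 := by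
    rw [show ((Real.pi : ℂ)/2) = ((Real.pi/2 : ℝ) : ℂ) by push_cast; ring, ← Complex.ofReal_sin,
      Real.sin_pi_div_two, Complex.ofReal_one]
  rw [c2, s2]
  linear_combination (-2 : ℂ) * Complex.sin_sq_add_cos_sq z

lemma polar_aux (θ : ℝ) : (1 : ℂ) - Complex.exp (θ * I) =
    ((2 * Real.sin (θ/2) : ℝ) : ℂ) * Complex.exp (((θ/2 - π/2 : ℝ) : ℂ) * I) := by
  have := polar_key ((θ/2 : ℝ) : ℂ)
  rw [show 2 * ((θ/2 : ℝ) : ℂ) * I = (θ : ℂ) * I by push_cast; ring] at this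
  rw [this, ← Complex.ofReal_sin]
  push_cast
  ring

lemma c_form (θ : ℝ) : ((1 : ℂ) - Complex.exp (θ * I))/4 =
    ((Real.sin (θ/2)/2 : ℝ) : ℂ) *
      (Complex.cos (((θ/2 - π/2 : ℝ)) : ℂ) + Complex.sin (((θ/2 - π/2 : ℝ)) : ℂ) * I) := by
  rw [polar_aux θ, Complex.exp_mul_I]
  push_cast
  ring

lemma c_arg (θ : ℝ) (h0 : 0 < θ) (h2 : θ < 2*π) :
    Complex.arg (((1 : ℂ) - Complex.exp (θ * I))/4) = θ/2 - π/2 := by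
  have hs : 0 < Real.sin (θ/2)/2 := by
    have := Real.sin_pos_of_pos_of_lt_pi (x := θ/2) (by linarith) (by linarith)
    linarith
  rw [c_form θ]
  refine Complex.arg_mul_cos_add_sin_mul_I hs ⟨?_, ?_⟩
  · linarith
  · linarith [Real.pi_pos]

lemma c_ne (θ : ℝ) (h0 : 0 < θ) (h2 : θ < 2*π) : ((1 : ℂ) - Complex.exp (θ * I))/4 ≠ 0 := by
  have hs : 0 < Real.sin (θ/2) := Real.sin_pos_of_pos_of_lt_pi (by linarith) (by linarith)
  rw [polar_aux θ]
  apply div_ne_zero _ (by norm_num)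
  apply mul_ne_zero _ (Complex.exp_ne_zero _)
  exact Complex.ofReal_ne_zero.2 (by positivity)

lemma equiv_aux (n k : ℕ) (hn : 2 ≤ n) (a : ℂ) (ha : a ≠ 0) :
    (((‖a‖ ^ (1 / (2 * (n : ℝ))) : ℝ) : ℂ) *
        Complex.exp (Complex.I * (Complex.arg a / (2 * n))) - 4 * a ^ ((1 : ℂ)/2) =
      ((‖a‖ ^ (1 / (2 * (n : ℝ))) : ℝ) : ℂ) *
        Complex.exp (Complex.I * ((Complex.arg a + 2 * k * Real.pi) / (2 * n))))
    ↔ a ^ (((((n : ℝ) - 1) / (2 * (n : ℝ))) : ℝ) : ℂ) =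
        (1 - Complex.exp (Complex.I * k * Real.pi / n)) / 4 := by
  have hnR : (0:ℝ) < (n:ℝ) := by positivity
  have hnC : (n:ℂ) ≠ 0 := Nat.cast_ne_zero.2 (by omega)
  have h1 : ((‖a‖ ^ (1 / (2 * (n : ℝ))) : ℝ) : ℂ) *
      Complex.exp (Complex.I * (Complex.arg a / (2 * n))) = a ^ ((1 / (2 * (n:ℂ))) : ℂ) := by
    rw [Complex.cpow_def_of_ne_zero ha, Real.rpow_def_of_pos (norm_pos_iff.mpr ha),
      Complex.ofReal_exp, ← Complex.exp_add]
    congr 1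
    rw [Complex.log]
    push_cast
    field_simp
  have h2 : Complex.exp (Complex.I * ((Complex.arg a + 2 * k * Real.pi) / (2 * n))) =
      Complex.exp (Complex.I * (Complex.arg a / (2 * n))) *
        Complex.exp (Complex.I * k * Real.pi / n) := by
    rw [← Complex.exp_add]
    congr 1
    field_simp
  rw [h2, h1]
  have hu : a ^ ((1 / (2 * (n:ℂ))) : ℂ) ≠ 0 := by
    rw [Complex.cpow_def_of_ne_zero ha]; exact Complex.exp_ne_zero _
  have hx : (((((n : ℝ) - 1) / (2 * (n : ℝ))) : ℝ) : ℂ) = (1:ℂ)/2 - 1/(2*(n:ℂ)) := by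
    push_cast
    field_simp
  rw [hx, Complex.cpow_sub _ _ ha]
  rw [div_eq_div_iff hu (by norm_num : (4:ℂ) ≠ 0)]
  constructor <;> intro h <;>
    linear_combination -h - Complex.exp (Complex.I * (k:ℂ) * (Real.pi:ℂ) / (n:ℂ)) * h1

lemma back_aux (n k : ℕ) (hn : 2 ≤ n) (hk1 : 2 ≤ k) (hk2 : k ≤ 2*n-1) :
    (((1 - Complex.exp (Complex.I * k * Real.pi / n)) / 4) ^ ((2*(n:ℂ))/((n:ℂ)-1))) ^
      ((((((n:ℝ)-1)/(2*(n:ℝ))) : ℝ)) : ℂ) = (1 - Complex.exp (Complex.I * k * Real.pi / n)) / 4 := by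
  have hnR : (0:ℝ) < (n:ℝ) := by positivity
  have hn1 : (0:ℝ) < (n:ℝ) - 1 := by
    have : (2:ℝ) ≤ (n:ℝ) := by exact_mod_cast hn
    linarith
  set θ : ℝ := k * π / n with hθdef
  have hθform : Complex.I * k * Real.pi / n = (θ:ℂ) * I := by
    rw [hθdef]; push_cast; ring
  have hkR : (k:ℝ) ≤ 2*(n:ℝ) - 1 := by
    have h1 : (k:ℝ) ≤ ((2*n-1 : ℕ) : ℝ) := by exact_mod_cast hk2
    have h2 : ((2*n-1 : ℕ) : ℝ) = 2*(n:ℝ) - 1 := by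
      have : 1 ≤ 2*n := by omega
      push_cast [Nat.cast_sub this]
      ring
    linarith [h1, h2.le]
  have hk2R : (2:ℝ) ≤ (k:ℝ) := by exact_mod_cast hk1
  have hθ0 : 0 < θ := by
    rw [hθdef]; positivity
  have hθ2 : θ < 2*π := by
    rw [hθdef, div_lt_iff₀ hnR]
    nlinarith [Real.pi_pos]
  rw [hθform]
  have hc := c_ne θ hθ0 hθ2
  have harg := c_arg θ hθ0 hθ2
  have hy : (2*(n:ℂ))/((n:ℂ)-1) = (((2*(n:ℝ)/((n:ℝ)-1)) : ℝ) : ℂ) := by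
    push_cast; ring
  have hargy : -π < (θ/2 - π/2) * (2*(n:ℝ)/((n:ℝ)-1)) ∧
      (θ/2 - π/2) * (2*(n:ℝ)/((n:ℝ)-1)) ≤ π := by
    constructor
    · have key : (θ/2 - π/2) * (2*(n:ℝ)/((n:ℝ)-1)) = π * ((k:ℝ) - n)/((n:ℝ)-1) := by
        rw [hθdef]; field_simp
      rw [key, lt_div_iff₀ hn1]
      nlinarith [Real.pi_pos]
    · have key : (θ/2 - π/2) * (2*(n:ℝ)/((n:ℝ)-1)) = π * ((k:ℝ) - n)/((n:ℝ)-1) := by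
        rw [hθdef]; field_simp
      rw [key, div_le_iff₀ hn1]
      nlinarith [Real.pi_pos]
  rw [hy, ← Complex.cpow_mul]
  · rw [← Complex.ofReal_mul,
      show (2*(n:ℝ)/((n:ℝ)-1)) * ((((n:ℝ)-1)/(2*(n:ℝ)))) = 1 by field_simp,
      Complex.ofReal_one, Complex.cpow_one]
  · simp only [Complex.mul_im, Complex.log_im, Complex.ofReal_re, Complex.ofReal_im,
      Complex.log_re, mul_zero, add_zero, zero_add, harg]
    exact hargy.1
  · simp only [Complex.mul_im, Complex.log_im, Complex.ofReal_re, Complex.ofReal_im,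
      Complex.log_re, mul_zero, add_zero, zero_add, harg]
    exact hargy.2

/-- The parameters `a_k = ((1 - e^{ikπ/n})/4)^(2n/(n-1))`, `k = 1, …, 2n-1`, are exactly
the nonzero solutions of `|a|^(1/(2n)) e^{iψ/(2n)} - 4√a = |a|^(1/(2n)) e^{i(ψ+2kπ)/(2n)}`
for some `k ∈ {1, …, 2n-1}`, i.e. the parameters for which the free critical value
`v_- = b_{n,0}(a) - 2√a` is a non-principal `2n`-th root of `a`. -/
theorem stmt17 (n : ℕ) (hn : 2 ≤ n) :
    {a : ℂ | a ≠ 0 ∧ ∃ k : ℕ, 1 ≤ k ∧ k ≤ 2 * n - 1 ∧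
        ((‖a‖ ^ (1 / (2 * (n : ℝ))) : ℝ) : ℂ) *
            Complex.exp (Complex.I * (Complex.arg a / (2 * n))) - 4 * a ^ ((1 : ℂ)/2) =
          ((‖a‖ ^ (1 / (2 * (n : ℝ))) : ℝ) : ℂ) *
            Complex.exp (Complex.I * ((Complex.arg a + 2 * k * Real.pi) / (2 * n)))} =
      {a : ℂ | ∃ k : ℕ, 1 ≤ k ∧ k ≤ 2 * n - 1 ∧
        a = ((1 - Complex.exp (Complex.I * k * Real.pi / n)) / 4) ^
              ((2 * (n : ℂ)) / ((n : ℂ) - 1))} := by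
  have hnR : (0:ℝ) < (n:ℝ) := by positivity
  have hn1 : (0:ℝ) < (n:ℝ) - 1 := by
    have : (2:ℝ) ≤ (n:ℝ) := by exact_mod_cast hn
    linarith
  have hnC : (n:ℂ) ≠ 0 := Nat.cast_ne_zero.2 (by omega)
  have hn1C : (n:ℂ) - 1 ≠ 0 := by
    intro h
    have : (n:ℂ) = 1 := by linear_combination h
    have : (n:ℕ) = 1 := by exact_mod_cast this
    omega
  ext a
  simp only [Set.mem_setOf_eq]
  constructor
  · rintro ⟨ha, k, hk1, hk2, heq⟩
    refine ⟨k, hk1, hk2, ?_⟩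
    have hx : a ^ (((((n : ℝ) - 1) / (2 * (n : ℝ))) : ℝ) : ℂ) =
        (1 - Complex.exp (Complex.I * k * Real.pi / n)) / 4 :=
      (equiv_aux n k hn a ha).1 heq
    have hxr0 : (0:ℝ) < ((n:ℝ)-1)/(2*(n:ℝ)) := by positivity
    have hxr1 : ((n:ℝ)-1)/(2*(n:ℝ)) < 1 := by
      rw [div_lt_iff₀ (by positivity)]
      linarith
    have hmul := Complex.cpow_mul (x := a) (y := (((((n : ℝ) - 1) / (2 * (n : ℝ))) : ℝ) : ℂ))
      ((2*(n:ℂ))/((n:ℂ)-1)) ?_ ?_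
    · rw [show ((((((n : ℝ) - 1) / (2 * (n : ℝ))) : ℝ)) : ℂ) * ((2*(n:ℂ))/((n:ℂ)-1)) = 1 by
        push_cast; field_simp, Complex.cpow_one] at hmul
      rw [hmul, hx]
    · simp only [Complex.mul_im, Complex.log_im, Complex.ofReal_re, Complex.ofReal_im,
        Complex.log_re, mul_zero, add_zero, zero_add]
      nlinarith [Complex.neg_pi_lt_arg a, Complex.arg_le_pi a, Real.pi_pos,
        mul_pos (show (0:ℝ) < π + Complex.arg a by linarith [Complex.neg_pi_lt_arg a]) hxr0]
    · simp only [Complex.mul_im, Complex.log_im, Complex.ofReal_re, Complex.ofReal_im,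
        Complex.log_re, mul_zero, add_zero, zero_add]
      nlinarith [Complex.neg_pi_lt_arg a, Complex.arg_le_pi a, Real.pi_pos,
        mul_nonneg (show (0:ℝ) ≤ π - Complex.arg a by linarith [Complex.arg_le_pi a]) hxr0.le]
  · rintro ⟨k, hk1, hk2, rfl⟩
    -- the parameter is c_k ^ y
    set c : ℂ := (1 - Complex.exp (Complex.I * k * Real.pi / n)) / 4 with hcdef
    have hθform : Complex.I * (k:ℂ) * Real.pi / n = (((k:ℝ) * π / n : ℝ):ℂ) * I := by
      push_cast; ring
    have hkR1 : (1:ℝ) ≤ (k:ℝ) := by exact_mod_cast hk1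
    have hkR : (k:ℝ) ≤ 2*(n:ℝ) - 1 := by
      have h1 : (k:ℝ) ≤ ((2*n-1 : ℕ) : ℝ) := by exact_mod_cast hk2
      have h2 : ((2*n-1 : ℕ) : ℝ) = 2*(n:ℝ) - 1 := by
        have : 1 ≤ 2*n := by omega
        push_cast [Nat.cast_sub this]
        ring
      linarith [h1, h2.le]
    have hθ0 : 0 < (k:ℝ) * π / n := by positivity
    have hθ2 : (k:ℝ) * π / n < 2*π := by
      rw [div_lt_iff₀ hnR]
      nlinarith [Real.pi_pos]
    have hcne : c ≠ 0 := by
      rw [hcdef, hθform]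
      exact c_ne _ hθ0 hθ2
    have ha : c ^ ((2*(n:ℂ))/((n:ℂ)-1)) ≠ 0 := by
      rw [Complex.cpow_def_of_ne_zero hcne]
      exact Complex.exp_ne_zero _
    by_cases hk : 2 ≤ k
    · refine ⟨ha, k, hk1, hk2, ?_⟩
      exact (equiv_aux n k hn _ ha).2 (back_aux n k hn hk hk2)
    · -- k = 1
      have hk1' : k = 1 := by omega
      subst hk1'
      -- show c ^ y = c' ^ y with k' = 2n-1
      set k' : ℕ := 2*n - 1 with hk'def
      have hk'cast : ((k' : ℕ) : ℂ) = 2*(n:ℂ) - 1 := by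
        have : 1 ≤ 2*n := by omega
        rw [hk'def]
        push_cast [Nat.cast_sub this]
        ring
      set c' : ℂ := (1 - Complex.exp (Complex.I * k' * Real.pi / n)) / 4 with hc'def
      have hconj : c' = (starRingEnd ℂ) c := by
        rw [hc'def, hcdef]
        have hexp : Complex.exp (Complex.I * k' * Real.pi / n) =
            Complex.exp ((starRingEnd ℂ) (Complex.I * 1 * Real.pi / n)) := by
          rw [show (starRingEnd ℂ) (Complex.I * 1 * Real.pi / n) =
              -(Complex.I * Real.pi) / (n:ℂ) by
            simp only [map_div₀, map_mul, Complex.conj_I, Complex.conj_ofReal, map_one,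
              map_natCast]
            ring]
          rw [show Complex.I * (k':ℂ) * Real.pi / n =
              -(Complex.I * Real.pi) / (n:ℂ) + 2 * Real.pi * Complex.I by
            rw [hk'cast]; field_simp; ring]
          rw [Complex.exp_add, Complex.exp_two_pi_mul_I, mul_one]
        rw [hexp, Complex.exp_conj]
        rw [map_div₀, map_sub, map_one, map_ofNat]
        norm_num
      -- arg of c
      have hargc : Complex.arg c = ((1:ℝ) * π / n)/2 - π/2 := by
        rw [hcdef, hθform]
        have := c_arg ((1:ℝ) * π / n) (by positivity) (by
          rw [div_lt_iff₀ hnR]; nlinarith [Real.pi_pos])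
        simpa using this
      have hargne : Complex.arg c ≠ π := by
        rw [hargc]
        have h1 : ((1:ℝ) * π / n)/2 - π/2 < π := by
          have : (0:ℝ) < π/(n:ℝ) := by positivity
          nlinarith [Real.pi_pos, (show (2:ℝ) ≤ (n:ℝ) by exact_mod_cast hn)]
        linarith
      -- c ^ y = c' ^ y
      have hcc' : c ^ ((2*(n:ℂ))/((n:ℂ)-1)) = c' ^ ((2*(n:ℂ))/((n:ℂ)-1)) := by
        have hc'ne : c' ≠ 0 := by
          rw [hconj]
          simpa using hcne
        rw [Complex.cpow_def_of_ne_zero hcne, Complex.cpow_def_of_ne_zero hc'ne]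
        rw [hconj, Complex.log_conj _ hargne]
        have hlog : (starRingEnd ℂ) (Complex.log c) =
            Complex.log c - 2 * (Complex.arg c : ℂ) * Complex.I := by
          apply Complex.ext
          · simp
          · simp [Complex.log_im]
            ring
        rw [hlog]
        have hay : ((Complex.arg c : ℝ) : ℂ) * ((2*(n:ℂ))/((n:ℂ)-1)) = -(Real.pi : ℂ) := by
          have hr : (((1:ℝ) * π / n / 2 - π/2) * (2*(n:ℝ)/((n:ℝ)-1)) : ℝ) = -π := by
            field_simp
            ring
          rw [hargc, show ((2*(n:ℂ))/((n:ℂ)-1)) = (((2*(n:ℝ)/((n:ℝ)-1)) : ℝ) : ℂ) by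
            push_cast; ring, ← Complex.ofReal_mul, hr, Complex.ofReal_neg]
        have hkey : (Complex.log c - 2 * (Complex.arg c : ℂ) * Complex.I) *
            ((2*(n:ℂ))/((n:ℂ)-1)) =
            Complex.log c * ((2*(n:ℂ))/((n:ℂ)-1)) + 2 * Real.pi * Complex.I := by
          linear_combination (-2*Complex.I) * hay
        rw [hkey, Complex.exp_add, Complex.exp_two_pi_mul_I, mul_one]
      have hk'1 : 1 ≤ k' := by omega
      have hk'2 : k' ≤ 2*n - 1 := le_refl _
      have hk'ge2 : 2 ≤ k' := by omega
      refine ⟨ha, k', hk'1, hk'2, ?_⟩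
      have hback := back_aux n k' hn hk'ge2 hk'2
      rw [← hc'def] at hback
      rw [hcc']
      refine (equiv_aux n k' hn _ ?_).2 ?_
      · rw [← hcc']; exact ha
      · rw [← hc'def]
        exact hback
end
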